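/- Let G = (V,E) be a finite simple graph and let g : V → ℝ be locally injective. Then χ(G) = Σ_{v ∈ V} i_g(v), where i_g(v) = 1 − χ(S_g^-(v)) is the Poincaré–Hopf index of g at v. -/

import Mathlib

open Finset
open scoped Classical

/-- The cliques of the graph `G` contained in the vertex set `A`
(nonempty sets of pairwise adjacent vertices). -/
noncomputable def cliquesOn {V : Type*} (G : SimpleGraph V) (A : Finset V) :
    Finset (Finset V) :=
  A.powerset.filter (fun s => s.Nonempty ∧ G.IsClique (s : Set V))

/-- Euler characteristic of the subgraph of `G` induced on `A`:
`χ = Σ_x (−1)^{|x|−1}` over the cliques `x` contained in `A`. -/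
noncomputable def eulerCharOn {V : Type*} (G : SimpleGraph V) (A : Finset V) : ℤ :=
  ∑ s ∈ cliquesOn G A, (-1) ^ (s.card - 1)

/-- Euler characteristic of a finite simple graph. -/
noncomputable def eulerChar {V : Type*} [Fintype V] (G : SimpleGraph V) : ℤ :=
  eulerCharOn G Finset.univ

/-- The vertex set of `S_g^-(v)`: the neighbours `w` of `v` with `g w < g v`. -/
noncomputable def sphereMinus {V : Type*} [Fintype V] (G : SimpleGraph V)
    (g : V → ℝ) (v : V) : Finset V :=
  Finset.univ.filter (fun w => G.Adj v w ∧ g w < g v)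

/-- Poincaré–Hopf: for a locally injective function `g` on a finite simple graph `G`,
`χ(G) = Σ_v i_g(v)` where `i_g(v) = 1 − χ(S_g^-(v))`. -/
theorem poincare_hopf {V : Type*} [Fintype V] (G : SimpleGraph V) (g : V → ℝ)
    (hg : ∀ v w : V, G.Adj v w → g v ≠ g w) :
    eulerChar G = ∑ v : V, (1 - eulerCharOn G (sphereMinus G g v)) := by
  classical
  set P : V → Finset V → Prop := fun v x => v ∈ x ∧ ∀ w ∈ x, w ≠ v → g w < g v with hP
  have hCmem : ∀ {x : Finset V}, x ∈ cliquesOn G (univ : Finset V) ↔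
      x.Nonempty ∧ G.IsClique (x : Set V) := by
    intro x
    simp [cliquesOn]
  -- existence and uniqueness of the top vertex of a clique
  have hEU : ∀ x ∈ cliquesOn G (univ : Finset V), ∃! v, P v x := by
    intro x hx
    obtain ⟨hne, hcl⟩ := hCmem.mp hx
    obtain ⟨v, hv, hvmax⟩ := x.exists_max_image g hne
    refine ⟨v, ⟨hv, fun w hw hwv => ?_⟩, ?_⟩
    · have hadj : G.Adj v w := hcl hv hw (Ne.symm hwv)
      exact lt_of_le_of_ne (hvmax w hw) (fun h => hg v w hadj h.symm)
    · rintro u ⟨hu, humax⟩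
      by_contra hne'
      have h1 : g v < g u := humax v hv (Ne.symm hne')
      exact absurd (hvmax u hu) (not_le.mpr h1)
  -- rewrite χ(G) as a double sum
  have step1 : eulerChar G = ∑ v : V, ∑ x ∈ (cliquesOn G (univ : Finset V)).filter (P v),
      (-1 : ℤ) ^ (x.card - 1) := by
    rw [eulerChar, eulerCharOn]
    have : ∀ x ∈ cliquesOn G (univ : Finset V),
        (-1 : ℤ) ^ (x.card - 1) = ∑ v : V, if P v x then (-1 : ℤ) ^ (x.card - 1) else 0 := by
      intro x hx
      obtain ⟨v, hv, hvu⟩ := hEU x hx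
      rw [Finset.sum_eq_single_of_mem v (mem_univ v)]
      · rw [if_pos hv]
      · intro b _ hb
        have : ¬ P b x := fun h => hb (hvu b h)
        simp [this]
    rw [Finset.sum_congr rfl this, Finset.sum_comm]
    exact Finset.sum_congr rfl fun v _ => (Finset.sum_filter _ _).symm
  rw [step1]
  refine Finset.sum_congr rfl fun v _ => ?_
  -- per-vertex computation
  have hvnotsphere : v ∉ sphereMinus G g v := by
    simp [sphereMinus, fun h => (G.loopless.irrefl v h)]
  have hbij : ∑ x ∈ (cliquesOn G (univ : Finset V)).filter (P v), (-1 : ℤ) ^ (x.card - 1)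
      = ∑ s ∈ insert (∅ : Finset V) (cliquesOn G (sphereMinus G g v)), (-1 : ℤ) ^ s.card := by
    refine Finset.sum_bij' (fun x _ => x.erase v) (fun s _ => insert v s) ?_ ?_ ?_ ?_ ?_
    · -- maps into target
      intro x hx
      have hxC := (Finset.mem_filter.mp hx).1
      have hvx := (Finset.mem_filter.mp hx).2.1
      have hmax := (Finset.mem_filter.mp hx).2.2
      obtain ⟨hne, hcl⟩ := hCmem.mp hxC
      rcases Finset.eq_empty_or_nonempty (x.erase v) with he | hne'
      · simp [he]
      · rw [Finset.mem_insert]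
        right
        rw [cliquesOn, Finset.mem_filter, Finset.mem_powerset]
        refine ⟨?_, hne', hcl.subset (by simp [Finset.erase_subset])⟩
        intro w hw
        obtain ⟨hwv, hwx⟩ := Finset.mem_erase.mp hw
        have hadj : G.Adj v w := hcl hvx hwx (Ne.symm hwv)
        simp [sphereMinus, hadj, hmax w hwx hwv]
    · -- inverse maps into source
      intro s hs
      have hsub : s ⊆ sphereMinus G g v ∧ (s.Nonempty → G.IsClique (s : Set V)) := by
        rcases Finset.mem_insert.mp hs with h | h
        · subst h; simp
        · rw [cliquesOn, Finset.mem_filter, Finset.mem_powerset] at h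
          exact ⟨h.1, fun _ => h.2.2⟩
      have hsph : ∀ w ∈ s, G.Adj v w ∧ g w < g v := by
        intro w hw
        have := hsub.1 hw
        simpa [sphereMinus] using this
      rw [Finset.mem_filter]
      constructor
      · rw [hCmem]
        refine ⟨⟨v, Finset.mem_insert_self v s⟩, ?_⟩
        intro a ha b hb hab
        simp only [Finset.coe_insert, Set.mem_insert_iff, Finset.mem_coe] at ha hb
        rcases ha with rfl | ha <;> rcases hb with rfl | hb
        · exact absurd rfl hab
        · exact (hsph b hb).1
        · exact ((hsph a ha).1).symm
        · rcases Finset.eq_empty_or_nonempty s with rfl | hne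
          · simp at ha
          · exact hsub.2 hne ha hb hab
      · refine ⟨Finset.mem_insert_self v s, ?_⟩
        intro w hw hwv
        have hws : w ∈ s := by
          rcases Finset.mem_insert.mp hw with rfl | h
          · exact absurd rfl hwv
          · exact h
        exact (hsph w hws).2
    · -- left inverse
      intro x hx
      have hvx : v ∈ x := (Finset.mem_filter.mp hx).2.1
      exact Finset.insert_erase hvx
    · -- right inverse
      intro s hs
      have hvs : v ∉ s := by
        intro h
        rcases Finset.mem_insert.mp hs with rfl | h'
        · simp at h
        · rw [cliquesOn, Finset.mem_filter, Finset.mem_powerset] at h'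
          exact hvnotsphere (h'.1 h)
      exact Finset.erase_insert hvs
    · -- values agree
      intro x hx
      have hvx : v ∈ x := (Finset.mem_filter.mp hx).2.1
      rw [Finset.card_erase_of_mem hvx]
  rw [hbij]
  have hempty : (∅ : Finset V) ∉ cliquesOn G (sphereMinus G g v) := by
    simp [cliquesOn]
  rw [Finset.sum_insert hempty]
  have : ∑ s ∈ cliquesOn G (sphereMinus G g v), (-1 : ℤ) ^ s.card
      = - eulerCharOn G (sphereMinus G g v) := by
    rw [eulerCharOn, ← Finset.sum_neg_distrib]
    refine Finset.sum_congr rfl fun s hs => ?_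
    have hne : s.Nonempty := by
      rw [cliquesOn, Finset.mem_filter] at hs
      exact hs.2.1
    have hc : 1 ≤ s.card := Finset.one_le_card.mpr hne
    have hcc : s.card = (s.card - 1) + 1 := by omega
    conv_lhs => rw [hcc]
    rw [pow_succ]
    ring
  rw [this]
  simp only [Finset.card_empty, pow_zero]
  ring
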